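/- For every positive rational number r, there exists a finite simple undirected graph Γ = (V, E) such that |Aut(Γ)| / |V| = r, where Aut(Γ) is the group of graph automorphisms of Γ. -/

import Mathlib

open Sum

/-- Clique on `Fin n` with a pendant path on `Fin m` attached at vertex `0`. -/
def cliqueTail (n m : ℕ) : SimpleGraph (Fin n ⊕ Fin m) where
  Adj x y :=
    match x, y with
    | inl i, inl j => i ≠ j
    | inl i, inr j => i.val = 0 ∧ j.val = 0
    | inr j, inl i => i.val = 0 ∧ j.val = 0
    | inr i, inr j => i.val + 1 = j.val ∨ j.val + 1 = i.val
  symm := by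
    constructor
    rintro (i|i) (j|j) h
    · exact Ne.symm h
    · exact h
    · exact h
    · omega
  loopless := by
    constructor
    rintro (i|i) h
    · exact h rfl
    · omega

@[simp] lemma cliqueTail_adj_inl_inl {n m : ℕ} {i j : Fin n} :
    (cliqueTail n m).Adj (inl i) (inl j) ↔ i ≠ j := Iff.rfl

@[simp] lemma cliqueTail_adj_inl_inr {n m : ℕ} {i : Fin n} {j : Fin m} :
    (cliqueTail n m).Adj (inl i) (inr j) ↔ i.val = 0 ∧ j.val = 0 := Iff.rfl

@[simp] lemma cliqueTail_adj_inr_inl {n m : ℕ} {i : Fin n} {j : Fin m} :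
    (cliqueTail n m).Adj (inr j) (inl i) ↔ i.val = 0 ∧ j.val = 0 := Iff.rfl

@[simp] lemma cliqueTail_adj_inr_inr {n m : ℕ} {i j : Fin m} :
    (cliqueTail n m).Adj (inr i) (inr j) ↔ i.val + 1 = j.val ∨ j.val + 1 = i.val := Iff.rfl

/-- Lying in a triangle. -/
def InTri {V : Type*} (G : SimpleGraph V) (x : V) : Prop :=
  ∃ a b, G.Adj x a ∧ G.Adj x b ∧ G.Adj a b

lemma intri_map {V W : Type*} {G : SimpleGraph V} {H : SimpleGraph W} (f : G ≃g H) (x : V)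
    (h : InTri G x) : InTri H (f x) := by
  obtain ⟨a, b, h1, h2, h3⟩ := h
  exact ⟨f a, f b, f.map_adj_iff.mpr h1, f.map_adj_iff.mpr h2, f.map_adj_iff.mpr h3⟩

lemma intri_iff_exists_inl {n m : ℕ} (hn : 3 ≤ n) (x : Fin n ⊕ Fin m) :
    InTri (cliqueTail n m) x ↔ ∃ i, x = inl i := by
  constructor
  · rintro ⟨a, b, h1, h2, h3⟩
    rcases x with i | j
    · exact ⟨i, rfl⟩
    · exfalso
      rcases a with a | a <;> rcases b with b | b <;>
        simp only [cliqueTail_adj_inl_inl, cliqueTail_adj_inl_inr, cliqueTail_adj_inr_inl,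
          cliqueTail_adj_inr_inr, ne_eq, Fin.ext_iff] at h1 h2 h3 <;> omega
  · rintro ⟨i, rfl⟩
    by_cases hi0 : i.val = 0
    · refine ⟨inl ⟨1, by omega⟩, inl ⟨2, by omega⟩, ?_, ?_, ?_⟩ <;>
        simp [Fin.ext_iff] <;> omega
    · by_cases hi1 : i.val = 1
      · refine ⟨inl ⟨0, by omega⟩, inl ⟨2, by omega⟩, ?_, ?_, ?_⟩ <;>
          simp [Fin.ext_iff] <;> omega
      · refine ⟨inl ⟨0, by omega⟩, inl ⟨1, by omega⟩, ?_, ?_, ?_⟩ <;>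
          simp [Fin.ext_iff] <;> omega

section Aut

variable {n m : ℕ}

lemma maps_inl (hn : 3 ≤ n) (f : cliqueTail n m ≃g cliqueTail n m) (i : Fin n) :
    ∃ i', f (inl i) = inl i' := by
  have h : InTri (cliqueTail n m) (f (inl i)) :=
    intri_map f _ ((intri_iff_exists_inl hn _).mpr ⟨i, rfl⟩)
  exact (intri_iff_exists_inl hn _).mp h

lemma maps_inr (hn : 3 ≤ n) (f : cliqueTail n m ≃g cliqueTail n m) (j : Fin m) :
    ∃ j', f (inr j) = inr j' := by
  rcases h : f (inr j) with i' | j'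
  · exfalso
    have h2 : InTri (cliqueTail n m) (f.symm (f (inr j))) := by
      rw [h]
      exact intri_map f.symm _ ((intri_iff_exists_inl hn _).mpr ⟨i', rfl⟩)
    rw [f.symm_apply_apply] at h2
    obtain ⟨i, hi⟩ := (intri_iff_exists_inl hn _).mp h2
    exact absurd hi (by simp)
  · exact ⟨j', rfl⟩

lemma fix_zeros (hn : 3 ≤ n) (hm : 1 ≤ m) (f : cliqueTail n m ≃g cliqueTail n m) :
    f (inl ⟨0, by omega⟩) = inl ⟨0, by omega⟩ ∧ f (inr ⟨0, hm⟩) = inr ⟨0, hm⟩ := by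
  obtain ⟨i', hi'⟩ := maps_inl hn f ⟨0, by omega⟩
  obtain ⟨j', hj'⟩ := maps_inr hn f ⟨0, hm⟩
  have hadj : (cliqueTail n m).Adj (inl (⟨0, by omega⟩ : Fin n)) (inr (⟨0, hm⟩ : Fin m)) := by
    simp
  have h2 : (cliqueTail n m).Adj (f (inl ⟨0, by omega⟩)) (f (inr ⟨0, hm⟩)) :=
    f.map_adj_iff.mpr hadj
  rw [hi', hj'] at h2
  simp only [cliqueTail_adj_inl_inr] at h2
  constructor
  · rw [hi']; congr 1; exact Fin.ext h2.1
  · rw [hj']; congr 1; exact Fin.ext h2.2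

lemma fix_inr (hn : 3 ≤ n) (hm : 1 ≤ m) (f : cliqueTail n m ≃g cliqueTail n m) :
    ∀ j : Fin m, f (inr j) = inr j := by
  have key : ∀ k : ℕ, ∀ hk : k < m, f (inr ⟨k, hk⟩) = inr ⟨k, hk⟩ := by
    intro k
    induction k using Nat.strong_induction_on with
    | _ k ih =>
      intro hk
      match k with
      | 0 => exact (fix_zeros hn hm f).2
      | k + 1 =>
        have hprev : f (inr ⟨k, by omega⟩) = inr ⟨k, by omega⟩ := ih k (by omega) (by omega)
        obtain ⟨j', hj'⟩ := maps_inr hn f ⟨k + 1, hk⟩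
        have hadj : (cliqueTail n m).Adj (inr (⟨k, by omega⟩ : Fin m)) (inr ⟨k + 1, hk⟩) := by
          simp
        have h2 := f.map_adj_iff.mpr hadj
        rw [hprev, hj'] at h2
        simp only [cliqueTail_adj_inr_inr] at h2
        rcases h2 with h2 | h2
        · rw [hj']; congr 1; exact Fin.ext h2.symm
        · -- j'.val + 1 = k, so j'.val = k - 1, contradiction with injectivity
          exfalso
          have hk1 : 1 ≤ k := by omega
          have hj'val : j'.val = k - 1 := by omega
          have hfix : f (inr ⟨k - 1, by omega⟩) = inr ⟨k - 1, by omega⟩ :=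
            ih (k - 1) (by omega) (by omega)
          have : f (inr ⟨k - 1, by omega⟩) = f (inr ⟨k + 1, hk⟩) := by
            rw [hfix, hj']
            congr 1
            exact Fin.ext (by simp [hj'val])
          have := f.injective this
          simp only [inr.injEq, Fin.mk.injEq] at this
          omega
  intro j
  have := key j.val j.isLt
  simpa using this

/-- Extension of a permutation of the nonzero clique vertices to an automorphism. -/
def extAut (hn : 3 ≤ n) (σ : Equiv.Perm {i : Fin n // i ≠ ⟨0, by omega⟩}) :
    cliqueTail n m ≃g cliqueTail n m where
  toEquiv := Equiv.sumCongr (Equiv.Perm.ofSubtype σ) (Equiv.refl _)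
  map_rel_iff' := by
    have hτ0 : Equiv.Perm.ofSubtype σ ⟨0, by omega⟩ = ⟨0, by omega⟩ :=
      Equiv.Perm.ofSubtype_apply_of_not_mem σ (by simp)
    have hval : ∀ i : Fin n, (Equiv.Perm.ofSubtype σ i).val = 0 ↔ i.val = 0 := by
      intro i
      constructor
      · intro h
        have : Equiv.Perm.ofSubtype σ i = Equiv.Perm.ofSubtype σ ⟨0, by omega⟩ := by
          rw [hτ0]; exact Fin.ext h
        have := (Equiv.Perm.ofSubtype σ).injective this
        rw [this]
      · intro h
        have : i = (⟨0, by omega⟩ : Fin n) := Fin.ext h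
        rw [this, hτ0]
    rintro (i|i) (j|j)
    · simp
    · simpa using fun _ => hval i
    · simpa using fun _ => hval j
    · simp

lemma extAut_injective (hn : 3 ≤ n) (hm : 1 ≤ m) :
    Function.Injective (extAut (m := m) hn) := by
  intro σ₁ σ₂ h
  ext ⟨i, hi⟩
  have h2 : extAut (m := m) hn σ₁ (inl i) = extAut (m := m) hn σ₂ (inl i) := by rw [h]
  simp only [extAut, RelIso.coe_fn_mk, Equiv.sumCongr_apply, Sum.map_inl, inl.injEq] at h2
  rw [Equiv.Perm.ofSubtype_apply_of_mem σ₁ hi, Equiv.Perm.ofSubtype_apply_of_mem σ₂ hi] at h2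
  exact congrArg Fin.val h2

/-- Left projection with default value `0`. -/
def projL (n m : ℕ) (hn : 3 ≤ n) : Fin n ⊕ Fin m → Fin n :=
  Sum.elim id (fun _ => ⟨0, by omega⟩)

lemma key_projL (hn : 3 ≤ n) (f : cliqueTail n m ≃g cliqueTail n m) (i : Fin n) :
    f (inl i) = inl (projL n m hn (f (inl i))) := by
  obtain ⟨i', h⟩ := maps_inl hn f i
  rw [h]; rfl

lemma projL_ne_zero (hn : 3 ≤ n) (hm : 1 ≤ m) (f : cliqueTail n m ≃g cliqueTail n m)
    (i : Fin n) (hi : i ≠ ⟨0, by omega⟩) : projL n m hn (f (inl i)) ≠ ⟨0, by omega⟩ := by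
  intro h
  have h1 := key_projL hn f i
  rw [h] at h1
  have h2 : f (inl i) = f (inl ⟨0, by omega⟩) := by
    rw [h1, (fix_zeros hn hm f).1]
  exact hi (by simpa using f.injective h2)

lemma extAut_surjective (hn : 3 ≤ n) (hm : 1 ≤ m) :
    Function.Surjective (extAut (m := m) hn) := by
  intro f
  refine ⟨⟨fun x => ⟨projL n m hn (f (inl x.1)), projL_ne_zero hn hm f x.1 x.2⟩,
    fun x => ⟨projL n m hn (f.symm (inl x.1)), projL_ne_zero hn hm f.symm x.1 x.2⟩, ?_, ?_⟩, ?_⟩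
  · rintro ⟨i, hi⟩
    apply Subtype.ext
    simp only
    conv_lhs => rw [← key_projL hn f i]
    rw [f.symm_apply_apply]
    rfl
  · rintro ⟨i, hi⟩
    apply Subtype.ext
    simp only
    conv_lhs => rw [← key_projL hn f.symm i]
    rw [f.apply_symm_apply]
    rfl
  · apply RelIso.ext
    rintro (i | j)
    · by_cases hi : i = (⟨0, by omega⟩ : Fin n)
      · subst hi
        show inl (Equiv.Perm.ofSubtype _ _) = _
        rw [Equiv.Perm.ofSubtype_apply_of_not_mem _ (by simp), (fix_zeros hn hm f).1]
      · show inl (Equiv.Perm.ofSubtype _ _) = _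
        rw [Equiv.Perm.ofSubtype_apply_of_mem (p := fun j => j ≠ (⟨0, by omega⟩ : Fin n)) _ hi]
        exact (key_projL hn f i).symm
    · show inr j = _
      rw [fix_inr hn hm f j]

theorem card_aut (hn : 3 ≤ n) (hm : 1 ≤ m) :
    Nat.card (cliqueTail n m ≃g cliqueTail n m) = (n - 1).factorial := by
  have h := Nat.card_eq_of_bijective (extAut (m := m) hn)
    ⟨extAut_injective hn hm, extAut_surjective hn hm⟩
  rw [← h, Nat.card_eq_fintype_card, Fintype.card_perm]
  congr 1
  simp [Fintype.card_subtype_compl]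

end Aut

/-- For every positive rational `r`, there is a finite simple graph `Γ = (V, E)`
with `|Aut Γ| / |V| = r`. -/
theorem exists_graph_aut_card_div_vertex_card_eq (r : ℚ) (hr : 0 < r) :
    ∃ (V : Type) (G : SimpleGraph V), Finite V ∧
      (Nat.card (G ≃g G) : ℚ) / (Nat.card V : ℚ) = r := by
  set p : ℕ := r.num.toNat with hp
  set q : ℕ := r.den with hq
  have hp0 : 0 < p := by
    have := Rat.num_pos.mpr hr
    omega
  have hq0 : 0 < q := r.pos
  set n : ℕ := p + 5 with hn
  -- c := (n-1)!/p
  have hdvd : p ∣ (n - 1).factorial := Nat.dvd_factorial hp0 (by omega)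
  set c : ℕ := (n - 1).factorial / p with hc
  have hpc : p * c = (n - 1).factorial := Nat.mul_div_cancel' hdvd
  -- (n-1)! ≥ p * (n+1)
  have hfac : p * (n + 1) ≤ (n - 1).factorial := by
    have h1 : (n - 1).factorial = (p + 4) * (p + 3).factorial := by
      have : n - 1 = p + 4 := by omega
      rw [this, Nat.factorial_succ]
    have h2 : p + 3 ≤ (p + 3).factorial := Nat.self_le_factorial _
    calc p * (n + 1) = p * (p + 6) := by rw [hn]
      _ ≤ (p + 4) * (p + 3) := by nlinarith
      _ ≤ (p + 4) * (p + 3).factorial := Nat.mul_le_mul_left _ h2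
      _ = (n - 1).factorial := h1.symm
  have hcn : n + 1 ≤ c := by
    have : p * (n + 1) ≤ p * c := by rw [hpc]; exact hfac
    exact Nat.le_of_mul_le_mul_left this hp0
  have hqc : n + 1 ≤ q * c := le_trans hcn (Nat.le_mul_of_pos_left _ hq0)
  set m : ℕ := q * c - n with hm
  have hm1 : 1 ≤ m := by omega
  have hnm : n + m = q * c := by omega
  refine ⟨Fin n ⊕ Fin m, cliqueTail n m, inferInstance, ?_⟩
  have hcard : Nat.card (Fin n ⊕ Fin m) = n + m := by
    rw [Nat.card_eq_fintype_card, Fintype.card_sum, Fintype.card_fin, Fintype.card_fin]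
  rw [card_aut (by omega) hm1, hcard, hnm, ← hpc]
  have hc0 : (0:ℚ) < (c:ℚ) := by exact_mod_cast (by omega : 0 < c)
  push_cast
  rw [mul_div_mul_right _ _ (ne_of_gt hc0)]
  have hpq : (p : ℚ) = (r.num : ℚ) := by
    rw [hp]
    exact_mod_cast Int.toNat_of_nonneg (le_of_lt (Rat.num_pos.mpr hr))
  rw [hpq, hq]
  exact Rat.num_div_den r
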